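/- Let a_1 ≥ a_2 ≥ ... ≥ a_n be nonnegative real numbers. Then (Σ_{i=1}^n a_i)(a_1 + a_n) ≥ Σ_{i=1}^n a_i² + n·a_1·a_n, with equality if and only if there exists s ∈ {1,...,n} with a_1 = ... = a_s and a_{s+1} = ... = a_n. -/

import Mathlib

open Finset BigOperators

/-- For nonnegative reals `a₁ ≥ a₂ ≥ ⋯ ≥ aₙ`,
`(Σ aᵢ)(a₁ + aₙ) ≥ Σ aᵢ² + n·a₁·aₙ`, with equality iff there is `s ∈ {1,…,n}` with
`a₁ = ⋯ = aₛ` and `a_{s+1} = ⋯ = aₙ`. -/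
theorem sum_mul_first_add_last_ge (n : ℕ) (hn : 1 ≤ n) (a : Fin n → ℝ)
    (hmono : Antitone a) (hpos : ∀ i, 0 ≤ a i) :
    (∑ i, a i) * (a ⟨0, by omega⟩ + a ⟨n - 1, by omega⟩)
        ≥ (∑ i, (a i) ^ 2) + n * (a ⟨0, by omega⟩ * a ⟨n - 1, by omega⟩)
    ∧ ((∑ i, a i) * (a ⟨0, by omega⟩ + a ⟨n - 1, by omega⟩)
          = (∑ i, (a i) ^ 2) + n * (a ⟨0, by omega⟩ * a ⟨n - 1, by omega⟩)
        ↔ ∃ s : ℕ, 1 ≤ s ∧ s ≤ n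
            ∧ (∀ i : Fin n, (i : ℕ) < s → a i = a ⟨0, by omega⟩)
            ∧ (∀ i : Fin n, s ≤ (i : ℕ) → a i = a ⟨n - 1, by omega⟩)) := by
  set A := a ⟨0, by omega⟩ with hAdef
  set B := a ⟨n - 1, by omega⟩ with hBdef
  have hA : ∀ i, a i ≤ A := fun i => hmono (by simp [Fin.le_def])
  have hB : ∀ i, B ≤ a i := fun i => hmono (by simp [Fin.le_def]; omega)
  have hterm : ∀ i, (A - a i) * (a i - B) = a i * (A + B) - (a i) ^ 2 - A * B := by
    intro i; ring
  have hsum : ∑ i, (A - a i) * (a i - B)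
      = (∑ i, a i) * (A + B) - (∑ i, (a i) ^ 2) - n * (A * B) := by
    simp_rw [hterm]
    rw [Finset.sum_sub_distrib, Finset.sum_sub_distrib, ← Finset.sum_mul,
      Finset.sum_const, card_univ, Fintype.card_fin, nsmul_eq_mul]
  have hnonneg : ∀ i ∈ Finset.univ, (0:ℝ) ≤ (A - a i) * (a i - B) := by
    intro i _
    exact mul_nonneg (by linarith [hA i]) (by linarith [hB i])
  have hge : (0:ℝ) ≤ ∑ i, (A - a i) * (a i - B) := Finset.sum_nonneg hnonneg
  constructor
  · -- inequality
    rw [hsum] at hge; linarith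
  constructor
  · -- equality → split
    intro heq
    have hzero : ∑ i, (A - a i) * (a i - B) = 0 := by rw [hsum]; linarith
    have hall : ∀ i : Fin n, a i = A ∨ a i = B := by
      intro i
      have := (Finset.sum_eq_zero_iff_of_nonneg hnonneg).mp hzero i (Finset.mem_univ i)
      rcases mul_eq_zero.mp this with h | h
      · left; linarith
      · right; linarith
    -- the set where a i = A is a lower set
    set S : Finset (Fin n) := Finset.univ.filter (fun i => a i = A) with hSdef
    have hlower : ∀ i j : Fin n, j ≤ i → i ∈ S → j ∈ S := by
      intro i j hji hi
      simp only [hSdef, Finset.mem_filter, Finset.mem_univ, true_and] at hi ⊢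
      have h1 : a i ≤ a j := hmono hji
      have h2 : a j ≤ A := hA j
      linarith [hi ▸ h1]
    refine ⟨S.card, ?_, ?_, ?_, ?_⟩
    · have : (⟨0, by omega⟩ : Fin n) ∈ S := by
        simp [hSdef, hAdef]
      exact Finset.card_pos.mpr ⟨_, this⟩
    · simpa using Finset.card_le_card (Finset.subset_univ S)
    · intro i hi
      by_contra hne
      have hiS : i ∉ S := by
        simp only [hSdef, Finset.mem_filter, Finset.mem_univ, true_and]
        exact hne
      have hsub : S ⊆ Finset.Iio i := by
        intro k hk
        simp only [Finset.mem_Iio]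
        by_contra hk'
        exact hiS (hlower k i (le_of_not_gt hk') hk)
      have := Finset.card_le_card hsub
      rw [Fin.card_Iio] at this
      omega
    · intro i hi
      rcases hall i with h | h
      · exfalso
        have hiS : i ∈ S := by simp [hSdef, h]
        have hsub : Finset.Iic i ⊆ S := fun k hk =>
          hlower i k (Finset.mem_Iic.mp hk) hiS
        have := Finset.card_le_card hsub
        rw [Fin.card_Iic] at this
        omega
      · exact h
  · -- split → equality
    rintro ⟨s, hs1, hsn, hlo, hhi⟩
    have hzero : ∑ i, (A - a i) * (a i - B) = 0 := by
      apply Finset.sum_eq_zero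
      intro i _
      rcases lt_or_ge (i : ℕ) s with h | h
      · rw [hlo i h]; ring
      · rw [hhi i h]; ring
    rw [hsum] at hzero; linarith
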